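/- Let $M_1, M_2, M_3$ be distinct primes, $\chi_1$ a nontrivial multiplicative character modulo $M_1$, $\chi_2$ a nontrivial multiplicative character modulo $M_2$, and let $q$ be a positive integer with $\gcd(q, M_1 M_2 M_3) = 1$. Let $m, n$ be integers, and let $\bar{M}_3$ denote an inverse of $M_3$ modulo $qM_1$. Then the complete character sum $\mathfrak{C} = \sum_{a \bmod q M_1 M_2} \chi_1(a)\chi_2(a)\, e\Big(\tfrac{\bar{M}_3 m a}{qM_1} + \tfrac{na}{qM_1M_2}\Big)$ satisfies: $\mathfrak{C} = q\, g_{\chi_1} g_{\chi_2}\, \chi_1(qM_2M_3)\, \bar{\chi}_1(M_2 m + M_3 n)\, \chi_2(qM_1)\, \bar{\chi}_2(n)$ if $q \mid M_2 m + M_3 n$, and $\mathfrak{C} = 0$ if $q \nmid M_2 m + M_3 n$. -/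

import Mathlib

/-- `e(z) = exp(2πiz)`. -/
noncomputable def e (z : ℝ) : ℂ := Complex.exp (2 * Real.pi * Complex.I * z)

open Finset

lemma e_add (x y : ℝ) : e (x + y) = e x * e y := by
  simp only [e, ← Complex.exp_add]
  push_cast
  ring_nf

lemma e_int (k : ℤ) : e k = 1 := by
  simp only [e]
  rw [show (2 * (Real.pi:ℂ) * Complex.I * ((k:ℝ):ℂ) : ℂ)
      = (k:ℤ) * (2 * Real.pi * Complex.I) by push_cast; ring]
  exact Complex.exp_int_mul_two_pi_mul_I k

lemma e_eq_one_iff (x : ℝ) : e x = 1 ↔ ∃ k : ℤ, x = k := by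
  simp only [e, Complex.exp_eq_one_iff]
  constructor
  · rintro ⟨n, hn⟩
    refine ⟨n, ?_⟩
    have h2 : (2 * (Real.pi:ℂ) * Complex.I) ≠ 0 := by
      simp [Real.pi_ne_zero, Complex.I_ne_zero]
    have hx : (x:ℂ) = n := by
      have : (2 * (Real.pi:ℂ) * Complex.I) * x = (2 * (Real.pi:ℂ) * Complex.I) * n := by
        linear_combination hn
      exact mul_left_cancel₀ h2 this
    exact_mod_cast hx
  · rintro ⟨k, rfl⟩
    exact ⟨k, by push_cast; ring⟩

/-- If `a ≡ b mod N` then `e (a/N) = e (b/N)`. -/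
lemma e_div_congr {N : ℕ} (hN : N ≠ 0) {a b : ℤ} (h : (a : ZMod N) = (b : ZMod N)) :
    e ((a : ℝ) / N) = e ((b : ℝ) / N) := by
  rw [ZMod.intCast_eq_intCast_iff] at h
  obtain ⟨k, hk⟩ := h.dvd
  have hN' : (N : ℝ) ≠ 0 := Nat.cast_ne_zero.mpr hN
  have hbr : (b : ℝ) = a + N * k := by
    have : (b : ℤ) = a + N * k := by linarith [hk]
    exact_mod_cast congrArg (Int.cast : ℤ → ℝ) this
  have : (b : ℝ) / N = (a : ℝ) / N + (k : ℤ) := by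
    rw [hbr]; field_simp
  rw [this, e_add, e_int, mul_one]

/-- The Gauss sum `g_χ = ∑_{d mod p} χ(d) e(d/p)`. -/
noncomputable def gaussSumE (p : ℕ) [NeZero p] (χ : MulChar (ZMod p) ℂ) : ℂ :=
  ∑ d : ZMod p, χ d * e ((d.val : ℝ) / p)

lemma mulChar_mul_conj {p : ℕ} [Fact p.Prime] (χ : MulChar (ZMod p) ℂ) {u : ZMod p}
    (hu : u ≠ 0) : χ u * (starRingEnd ℂ) (χ u) = 1 := by
  have hpow : (χ u) ^ (p - 1) = 1 := by
    rw [← map_pow, ZMod.pow_card_sub_one_eq_one hu, map_one]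
  have hp1 : p - 1 ≠ 0 := Nat.sub_ne_zero_of_lt (Fact.out : p.Prime).one_lt
  have hnorm : ‖χ u‖ = 1 := Complex.norm_eq_one_of_pow_eq_one hpow hp1
  rw [Complex.mul_conj, Complex.normSq_eq_norm_sq, hnorm]
  norm_num

lemma conj_mulChar {p : ℕ} [Fact p.Prime] (χ : MulChar (ZMod p) ℂ) {u : ZMod p}
    (hu : u ≠ 0) : (starRingEnd ℂ) (χ u) = χ u⁻¹ := by
  have h1 := mulChar_mul_conj χ hu
  have h2 : χ u * χ u⁻¹ = 1 := by
    rw [← map_mul, mul_inv_cancel₀ hu, map_one]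
  have hne : χ u ≠ 0 := by
    intro h; rw [h, zero_mul] at h1; exact zero_ne_one h1
  have := mul_left_cancel₀ hne (h1.trans h2.symm)
  exact this

lemma e_nat_mul (n : ℕ) (x : ℝ) : e (n * x) = e x ^ n := by
  simp only [e]
  rw [show (2 * (Real.pi:ℂ) * Complex.I * ((n * x : ℝ):ℂ))
      = n * (2 * Real.pi * Complex.I * x) by push_cast; ring, Complex.exp_nat_mul]

lemma sum_e_geom (q : ℕ) (hq : q ≠ 0) (K : ℤ) :
    ∑ α ∈ Finset.range q, e (((K * α : ℤ) : ℝ) / q) = if (q:ℤ) ∣ K then (q:ℂ) else 0 := by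
  have hq' : (q : ℝ) ≠ 0 := Nat.cast_ne_zero.mpr hq
  by_cases hdvd : (q:ℤ) ∣ K
  · rw [if_pos hdvd]
    obtain ⟨t, rfl⟩ := hdvd
    have h1 : ∀ α ∈ Finset.range q, e ((((q:ℤ) * t * α : ℤ):ℝ)/q) = 1 := by
      intro α _
      have : ((((q:ℤ) * t * α : ℤ)):ℝ)/q = ((t * α : ℤ):ℝ) := by push_cast; field_simp
      rw [this, e_int]
    rw [Finset.sum_congr rfl h1]
    simp
  · rw [if_neg hdvd]
    set ζ := e ((K:ℝ)/q) with hζdef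
    have hζ : ζ ≠ 1 := by
      rw [Ne, hζdef, e_eq_one_iff]
      rintro ⟨k, hk⟩
      apply hdvd
      refine ⟨k, ?_⟩
      have : (K:ℝ) = (q:ℝ) * k := by
        field_simp at hk
        linarith [hk]
      exact_mod_cast this
    have hterm : ∀ α ∈ Finset.range q, e (((K * α : ℤ):ℝ)/q) = ζ ^ α := by
      intro α _
      rw [hζdef, ← e_nat_mul]
      congr 1
      push_cast
      ring
    rw [Finset.sum_congr rfl hterm, geom_sum_eq hζ]
    have hζq : ζ ^ q = 1 := by
      rw [hζdef, ← e_nat_mul]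
      have : (q:ℝ) * ((K:ℝ)/q) = (K:ℤ) := by field_simp
      rw [this, e_int]
    rw [hζq, sub_self, zero_div]

lemma zmod_sum_val {N : ℕ} [NeZero N] (f : ℕ → ℂ) :
    ∑ x : ZMod N, f x.val = ∑ a ∈ Finset.range N, f a := by
  refine Finset.sum_nbij' (fun x => x.val) (fun a => (a : ZMod N)) ?_ ?_ ?_ ?_ ?_
  · intro a _; exact Finset.mem_range.mpr (ZMod.val_lt a)
  · intro a _; exact Finset.mem_univ _
  · intro a _; simp [ZMod.natCast_val, ZMod.cast_id]
  · intro a ha; exact ZMod.val_cast_of_lt (Finset.mem_range.mp ha)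
  · intro a _; rfl

lemma twisted_gauss {p : ℕ} [Fact p.Prime] (χ : MulChar (ZMod p) ℂ) (hχ : χ ≠ 1) (K : ℤ) :
    ∑ β : ZMod p, χ β * e (((K * (β.val : ℤ) : ℤ):ℝ)/p) =
      (starRingEnd ℂ) (χ ((K : ℤ) : ZMod p)) * gaussSumE p χ := by
  have hp : p ≠ 0 := (Fact.out : p.Prime).ne_zero
  by_cases hK : ((K : ℤ) : ZMod p) = 0
  · obtain ⟨t, ht⟩ := (ZMod.intCast_zmod_eq_zero_iff_dvd K p).mp hK
    have h1 : ∀ β : ZMod p, e (((K * (β.val : ℤ) : ℤ):ℝ)/p) = 1 := by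
      intro β
      rw [ht]
      have : ((((p:ℤ) * t * (β.val : ℤ) : ℤ)):ℝ)/p = ((t * (β.val:ℤ) : ℤ):ℝ) := by
        push_cast; field_simp
      rw [this, e_int]
    simp only [h1, mul_one]
    rw [MulChar.sum_eq_zero_of_ne_one hχ, hK, MulChar.map_nonunit χ not_isUnit_zero, map_zero, zero_mul]
  · set u := ((K : ℤ) : ZMod p) with hu
    have huinv : u⁻¹ ≠ 0 := inv_ne_zero hK
    have hre : ∑ β : ZMod p, χ β * e (((K * (β.val : ℤ) : ℤ):ℝ)/p)
        = ∑ d : ZMod p, χ (u⁻¹ * d) * e (((K * ((u⁻¹ * d).val : ℤ) : ℤ):ℝ)/p) :=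
      (Equiv.sum_comp (Equiv.mulLeft₀ u⁻¹ huinv)
        (fun β => χ β * e (((K * (β.val : ℤ) : ℤ):ℝ)/p))).symm
    rw [hre]
    rw [gaussSumE, Finset.mul_sum]
    apply Finset.sum_congr rfl
    intro d _
    have he : e (((K * ((u⁻¹ * d).val : ℤ) : ℤ):ℝ)/p) = e (((d.val : ℤ):ℝ)/p) := by
      apply e_div_congr hp
      push_cast [ZMod.natCast_val, ZMod.cast_id]
      rw [← hu, ← mul_assoc, mul_inv_cancel₀ hK, one_mul]
    rw [he, map_mul, conj_mulChar χ hK]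
    push_cast
    ring

lemma crt_sum (q M₁ M₂ : ℕ) [NeZero q] [NeZero M₁] [NeZero M₂]
    (cq1 : Nat.Coprime q M₁) (cq2 : Nat.Coprime q M₂) (c12 : Nat.Coprime M₁ M₂)
    (F : ℤ → ℂ) (hF : ∀ a b : ℤ, ((a : ZMod (q*M₁*M₂)) = (b : ZMod (q*M₁*M₂))) → F a = F b) :
    ∑ a ∈ Finset.range (q*M₁*M₂), F a =
      ∑ α : ZMod q, ∑ β : ZMod M₁, ∑ γ : ZMod M₂,
        F ((M₁:ℤ)*M₂*(α.val:ℤ) + (q:ℤ)*M₂*(β.val:ℤ) + (q:ℤ)*M₁*(γ.val:ℤ)) := by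
  haveI : NeZero (q*M₁*M₂) :=
    ⟨Nat.mul_ne_zero (Nat.mul_ne_zero (NeZero.ne q) (NeZero.ne M₁)) (NeZero.ne M₂)⟩
  set Q := q*M₁*M₂ with hQ
  -- step 1 : range sum to ZMod Q sum
  have step1 : ∑ a ∈ Finset.range Q, F a = ∑ x : ZMod Q, F (x.val : ℤ) := by
    rw [zmod_sum_val (fun a => F (a : ℤ))]
  rw [step1]
  -- the CRT map
  set φ : ZMod q × ZMod M₁ × ZMod M₂ → ZMod Q := fun p =>
    (((M₁:ℤ)*M₂*(p.1.val:ℤ) + (q:ℤ)*M₂*(p.2.1.val:ℤ) + (q:ℤ)*M₁*(p.2.2.val:ℤ) : ℤ) : ZMod Q)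
    with hφ
  have hqQ : q ∣ Q := ⟨M₁*M₂, by rw [hQ]; ring⟩
  have h1Q : M₁ ∣ Q := ⟨q*M₂, by rw [hQ]; ring⟩
  have h2Q : M₂ ∣ Q := ⟨q*M₁, by rw [hQ]; ring⟩
  have hinj : Function.Injective φ := by
    rintro ⟨x1, x2, x3⟩ ⟨y1, y2, y3⟩ hxy
    have key : ∀ (N : ℕ) (hN : N ∣ Q),
        (ZMod.castHom hN (ZMod N)) (φ (x1,x2,x3)) = (ZMod.castHom hN (ZMod N)) (φ (y1,y2,y3)) := by
      intro N hN; rw [hxy]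
    have e1 : x1 = y1 := by
      have h := key q hqQ
      simp only [hφ, map_intCast] at h
      push_cast at h
      simp only [ZMod.natCast_self, zero_mul, mul_zero, add_zero, zero_add,
        ZMod.natCast_val, ZMod.cast_id] at h
      have hunit : IsUnit ((M₁:ZMod q) * (M₂:ZMod q)) := by
        have hu : IsUnit (((M₁*M₂:ℕ)) : ZMod q) :=
          (ZMod.isUnit_iff_coprime _ _).mpr
            (Nat.coprime_mul_iff_left.mpr ⟨cq1.symm, cq2.symm⟩)
        push_cast at hu; exact hu
      exact hunit.mul_left_cancel h
    have e2 : x2 = y2 := by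
      have h := key M₁ h1Q
      simp only [hφ, map_intCast] at h
      push_cast at h
      simp only [ZMod.natCast_self, zero_mul, mul_zero, add_zero, zero_add,
        ZMod.natCast_val, ZMod.cast_id] at h
      have hunit : IsUnit ((q:ZMod M₁) * (M₂:ZMod M₁)) := by
        have hu : IsUnit (((q*M₂:ℕ)) : ZMod M₁) :=
          (ZMod.isUnit_iff_coprime _ _).mpr
            (Nat.coprime_mul_iff_left.mpr ⟨cq1, c12.symm⟩)
        push_cast at hu; exact hu
      exact hunit.mul_left_cancel h
    have e3 : x3 = y3 := by
      have h := key M₂ h2Q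
      simp only [hφ, map_intCast] at h
      push_cast at h
      simp only [ZMod.natCast_self, zero_mul, mul_zero, add_zero, zero_add,
        ZMod.natCast_val, ZMod.cast_id] at h
      have hunit : IsUnit ((q:ZMod M₂) * (M₁:ZMod M₂)) := by
        have hu : IsUnit (((q*M₁:ℕ)) : ZMod M₂) :=
          (ZMod.isUnit_iff_coprime _ _).mpr
            (Nat.coprime_mul_iff_left.mpr ⟨cq2, c12⟩)
        push_cast at hu; exact hu
      exact hunit.mul_left_cancel h
    simp [e1, e2, e3]
  have hbij : Function.Bijective φ := by
    rw [Fintype.bijective_iff_injective_and_card]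
    refine ⟨hinj, ?_⟩
    simp [ZMod.card, hQ]
    ring
  rw [← Fintype.sum_bijective φ hbij _ (fun x => F ((x.val : ℕ) : ℤ)) (fun p => rfl)]
  simp only [Fintype.sum_prod_type]
  apply Finset.sum_congr rfl
  intro α _
  apply Finset.sum_congr rfl
  intro β _
  apply Finset.sum_congr rfl
  intro γ _
  apply hF
  rw [Int.cast_natCast, ZMod.natCast_val, ZMod.cast_id]

lemma triple_factor {A B C : Type*} [Fintype A] [Fintype B] [Fintype C]
    (X : A → ℂ) (Y : B → ℂ) (Z : C → ℂ) :
    ∑ a : A, ∑ b : B, ∑ c : C, X a * Y b * Z c =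
      (∑ a : A, X a) * (∑ b : B, Y b) * (∑ c : C, Z c) := by
  rw [Finset.sum_mul_sum, Finset.sum_mul]
  apply Finset.sum_congr rfl
  intro a _
  rw [Finset.sum_mul]
  apply Finset.sum_congr rfl
  intro b _
  rw [Finset.mul_sum]

/-- The complete character sum
`𝔠 = ∑_{a mod qM₁M₂} χ₁(a)χ₂(a) e(M̄₃ma/(qM₁) + na/(qM₁M₂))`. -/
noncomputable def frakC (M₁ M₂ q : ℕ) (χ₁ : MulChar (ZMod M₁) ℂ)
    (χ₂ : MulChar (ZMod M₂) ℂ) (M₃bar m n : ℤ) : ℂ :=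
  ∑ a ∈ Finset.range (q * M₁ * M₂), χ₁ ((a : ℤ) : ZMod M₁) * χ₂ ((a : ℤ) : ZMod M₂) *
    e (((M₃bar * m * a : ℤ) : ℝ) / ((q : ℝ) * M₁) + ((n * a : ℤ) : ℝ) / ((q : ℝ) * M₁ * M₂))

/-- Evaluation of `𝔠`: it vanishes unless `q ∣ M₂m + M₃n`, in which case it equals
`q g_{χ₁} g_{χ₂} χ₁(qM₂M₃) χ̄₁(M₂m + M₃n) χ₂(qM₁) χ̄₂(n)`. -/
theorem frakC_eval (M₁ M₂ M₃ : ℕ) [Fact M₁.Prime] [Fact M₂.Prime] [Fact M₃.Prime]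
    (h₁₂ : M₁ ≠ M₂) (h₁₃ : M₁ ≠ M₃) (h₂₃ : M₂ ≠ M₃)
    (χ₁ : MulChar (ZMod M₁) ℂ) (hχ₁ : χ₁ ≠ 1)
    (χ₂ : MulChar (ZMod M₂) ℂ) (hχ₂ : χ₂ ≠ 1)
    (q : ℕ) (hq : 0 < q) (hcop : Nat.Coprime q (M₁ * M₂ * M₃))
    (m n M₃bar : ℤ) (hinv : (M₃ : ℤ) * M₃bar ≡ 1 [ZMOD ((q * M₁ : ℕ) : ℤ)]) :
    (((q : ℤ) ∣ (M₂ : ℤ) * m + (M₃ : ℤ) * n) →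
      frakC M₁ M₂ q χ₁ χ₂ M₃bar m n =
        (q : ℂ) * gaussSumE M₁ χ₁ * gaussSumE M₂ χ₂ *
          χ₁ (((q * M₂ * M₃ : ℕ) : ℤ) : ZMod M₁) *
          (starRingEnd ℂ) (χ₁ (((M₂ : ℤ) * m + (M₃ : ℤ) * n : ℤ) : ZMod M₁)) *
          χ₂ (((q * M₁ : ℕ) : ℤ) : ZMod M₂) *
          (starRingEnd ℂ) (χ₂ ((n : ℤ) : ZMod M₂))) ∧
    (¬ ((q : ℤ) ∣ (M₂ : ℤ) * m + (M₃ : ℤ) * n) →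
      frakC M₁ M₂ q χ₁ χ₂ M₃bar m n = 0) := by
  have hp1 : M₁.Prime := Fact.out
  have hp2 : M₂.Prime := Fact.out
  have hp3 : M₃.Prime := Fact.out
  haveI : NeZero q := ⟨hq.ne'⟩
  haveI : NeZero M₁ := ⟨hp1.ne_zero⟩
  haveI : NeZero M₂ := ⟨hp2.ne_zero⟩
  have hq0 : (q:ℝ) ≠ 0 := Nat.cast_ne_zero.mpr hq.ne'
  have hM₁0 : (M₁:ℝ) ≠ 0 := Nat.cast_ne_zero.mpr hp1.ne_zero
  have hM₂0 : (M₂:ℝ) ≠ 0 := Nat.cast_ne_zero.mpr hp2.ne_zero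
  have cq1 : Nat.Coprime q M₁ := Nat.Coprime.coprime_dvd_right ⟨M₂*M₃, by ring⟩ hcop
  have cq2 : Nat.Coprime q M₂ := Nat.Coprime.coprime_dvd_right ⟨M₁*M₃, by ring⟩ hcop
  have cq3 : Nat.Coprime q M₃ := Nat.Coprime.coprime_dvd_right ⟨M₁*M₂, by ring⟩ hcop
  have c12 : Nat.Coprime M₁ M₂ := (Nat.coprime_primes hp1 hp2).mpr h₁₂
  set Q : ℕ := q * M₁ * M₂ with hQ
  haveI : NeZero Q := ⟨Nat.mul_ne_zero (Nat.mul_ne_zero hq.ne' hp1.ne_zero) hp2.ne_zero⟩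
  have hQ0 : Q ≠ 0 := NeZero.ne Q
  have hQ0' : (Q:ℝ) ≠ 0 := Nat.cast_ne_zero.mpr hQ0
  set K : ℤ := (M₂:ℤ) * M₃bar * m + n with hK
  set S : ℤ := (M₂:ℤ) * m + (M₃:ℤ) * n with hS
  set F : ℤ → ℂ := fun a =>
    χ₁ ((a : ℤ) : ZMod M₁) * χ₂ ((a : ℤ) : ZMod M₂) * e (((K * a : ℤ) : ℝ) / (Q:ℝ)) with hF
  -- step 1 : rewrite frakC
  have hfrak : frakC M₁ M₂ q χ₁ χ₂ M₃bar m n = ∑ a ∈ Finset.range Q, F (a : ℤ) := by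
    rw [frakC]
    apply Finset.sum_congr rfl
    intro a _
    have hexp : ((M₃bar * m * a:ℤ):ℝ)/((q:ℝ)*M₁) + ((n*a:ℤ):ℝ)/((q:ℝ)*M₁*M₂)
        = ((K*a:ℤ):ℝ)/(Q:ℝ) := by
      rw [hK, hQ]
      push_cast
      field_simp
    rw [hexp, hF]
  -- step 2 : F is invariant mod Q
  have h1Q : M₁ ∣ Q := ⟨q*M₂, by rw [hQ]; ring⟩
  have h2Q : M₂ ∣ Q := ⟨q*M₁, by rw [hQ]; ring⟩
  have hFinv : ∀ a b : ℤ, ((a : ZMod Q) = (b : ZMod Q)) → F a = F b := by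
    intro a b h
    have h1 : ((a:ℤ) : ZMod M₁) = ((b:ℤ) : ZMod M₁) := by
      have := congrArg (ZMod.castHom h1Q (ZMod M₁)) h
      simpa only [map_intCast] using this
    have h2 : ((a:ℤ) : ZMod M₂) = ((b:ℤ) : ZMod M₂) := by
      have := congrArg (ZMod.castHom h2Q (ZMod M₂)) h
      simpa only [map_intCast] using this
    have h3 : e (((K * a : ℤ) : ℝ) / (Q:ℝ)) = e (((K * b : ℤ) : ℝ) / (Q:ℝ)) := by
      apply e_div_congr hQ0
      push_cast
      rw [h]
    simp only [hF, h1, h2, h3]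
  -- step 3 : CRT
  have hcrt := crt_sum q M₁ M₂ cq1 cq2 c12 F hFinv
  -- step 4 : factor each term
  have hterm : ∀ (α : ZMod q) (β : ZMod M₁) (γ : ZMod M₂),
      F ((M₁:ℤ)*M₂*(α.val:ℤ) + (q:ℤ)*M₂*(β.val:ℤ) + (q:ℤ)*M₁*(γ.val:ℤ)) =
        e (((K * (α.val:ℤ) : ℤ):ℝ)/q) *
        (χ₁ (((q*M₂ : ℕ):ℤ) : ZMod M₁) * χ₁ β * e (((K * (β.val:ℤ) : ℤ):ℝ)/M₁)) *
        (χ₂ (((q*M₁ : ℕ):ℤ) : ZMod M₂) * χ₂ γ * e (((K * (γ.val:ℤ) : ℤ):ℝ)/M₂)) := by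
    intro α β γ
    have hc1 : (((M₁:ℤ)*M₂*(α.val:ℤ) + (q:ℤ)*M₂*(β.val:ℤ) + (q:ℤ)*M₁*(γ.val:ℤ) : ℤ) : ZMod M₁)
        = (((q*M₂ : ℕ):ℤ) : ZMod M₁) * β := by
      push_cast [ZMod.natCast_val, ZMod.cast_id]
      simp [ZMod.natCast_self]
    have hc2 : (((M₁:ℤ)*M₂*(α.val:ℤ) + (q:ℤ)*M₂*(β.val:ℤ) + (q:ℤ)*M₁*(γ.val:ℤ) : ℤ) : ZMod M₂)
        = (((q*M₁ : ℕ):ℤ) : ZMod M₂) * γ := by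
      push_cast [ZMod.natCast_val, ZMod.cast_id]
      simp [ZMod.natCast_self]
    have hexp : ((K * ((M₁:ℤ)*M₂*(α.val:ℤ) + (q:ℤ)*M₂*(β.val:ℤ) + (q:ℤ)*M₁*(γ.val:ℤ)) : ℤ):ℝ)/(Q:ℝ)
        = ((K * (α.val:ℤ) : ℤ):ℝ)/q + (((K * (β.val:ℤ) : ℤ):ℝ)/M₁ + ((K * (γ.val:ℤ) : ℤ):ℝ)/M₂) := by
      rw [hQ]
      push_cast
      field_simp
      ring
    simp only [hF]
    rw [hc1, hc2, hexp, e_add, e_add, map_mul, map_mul]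
    ring
  rw [hfrak, hcrt]
  simp only [hterm]
  rw [triple_factor]
  -- step 5 : evaluate the three sums
  have hsum1 : ∑ α : ZMod q, e (((K * (α.val:ℤ) : ℤ):ℝ)/q)
      = if (q:ℤ) ∣ K then (q:ℂ) else 0 := by
    rw [← sum_e_geom q hq.ne' K]
    exact zmod_sum_val (fun v => e (((K * (v:ℤ) : ℤ):ℝ)/q))
  have hsum2 : ∑ β : ZMod M₁, χ₁ (((q*M₂ : ℕ):ℤ) : ZMod M₁) * χ₁ β * e (((K * (β.val:ℤ) : ℤ):ℝ)/M₁)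
      = χ₁ (((q*M₂ : ℕ):ℤ) : ZMod M₁) * ((starRingEnd ℂ) (χ₁ ((K:ℤ) : ZMod M₁)) * gaussSumE M₁ χ₁) := by
    rw [← twisted_gauss χ₁ hχ₁ K, Finset.mul_sum]
    apply Finset.sum_congr rfl
    intro β _
    ring
  have hsum3 : ∑ γ : ZMod M₂, χ₂ (((q*M₁ : ℕ):ℤ) : ZMod M₂) * χ₂ γ * e (((K * (γ.val:ℤ) : ℤ):ℝ)/M₂)
      = χ₂ (((q*M₁ : ℕ):ℤ) : ZMod M₂) * ((starRingEnd ℂ) (χ₂ ((K:ℤ) : ZMod M₂)) * gaussSumE M₂ χ₂) := by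
    rw [← twisted_gauss χ₂ hχ₂ K, Finset.mul_sum]
    apply Finset.sum_congr rfl
    intro γ _
    ring
  rw [hsum1, hsum2, hsum3]
  -- step 6 : conversions
  have hKn : ((K:ℤ) : ZMod M₂) = ((n:ℤ) : ZMod M₂) := by
    rw [hK]; push_cast; simp [ZMod.natCast_self]
  have hinv1 : ((M₃:ℕ) : ZMod M₁) * ((M₃bar:ℤ) : ZMod M₁) = 1 := by
    have hdvd : (M₁:ℤ) ∣ ((q*M₁ : ℕ):ℤ) := by push_cast; exact ⟨q, by ring⟩
    have h := (ZMod.intCast_eq_intCast_iff _ _ _).mpr (Int.ModEq.of_dvd hdvd hinv)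
    push_cast at h
    exact h
  have hinvq : ((M₃:ℕ) : ZMod q) * ((M₃bar:ℤ) : ZMod q) = 1 := by
    have hdvd : (q:ℤ) ∣ ((q*M₁ : ℕ):ℤ) := by push_cast; exact ⟨M₁, by ring⟩
    have h := (ZMod.intCast_eq_intCast_iff _ _ _).mpr (Int.ModEq.of_dvd hdvd hinv)
    push_cast at h
    exact h
  have hKS1 : ((M₃:ℕ) : ZMod M₁) * ((K:ℤ) : ZMod M₁) = ((S:ℤ) : ZMod M₁) := by
    rw [hK, hS]
    push_cast
    linear_combination ((M₂:ZMod M₁) * (m : ZMod M₁)) * hinv1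
  have hKSq : ((M₃:ℕ) : ZMod q) * ((K:ℤ) : ZMod q) = ((S:ℤ) : ZMod q) := by
    rw [hK, hS]
    push_cast
    linear_combination ((M₂:ZMod q) * (m : ZMod q)) * hinvq
  have hM₃uq : IsUnit ((M₃:ℕ) : ZMod q) := (ZMod.isUnit_iff_coprime _ _).mpr cq3.symm
  have hdvd_iff : ((q:ℤ) ∣ K) ↔ ((q:ℤ) ∣ S) := by
    rw [← ZMod.intCast_zmod_eq_zero_iff_dvd, ← ZMod.intCast_zmod_eq_zero_iff_dvd]
    constructor
    · intro h; rw [← hKSq, h, mul_zero]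
    · intro h
      rw [← hKSq] at h
      exact (hM₃uq.mul_right_eq_zero).mp h
  have hM₃1 : ((M₃:ℕ) : ZMod M₁) ≠ 0 := by
    rw [Ne, ZMod.natCast_eq_zero_iff]
    intro h
    exact h₁₃ ((Nat.prime_dvd_prime_iff_eq hp1 hp3).mp h)
  have hconj1 : (starRingEnd ℂ) (χ₁ ((K:ℤ) : ZMod M₁))
      = χ₁ ((M₃:ℕ) : ZMod M₁) * (starRingEnd ℂ) (χ₁ ((S:ℤ) : ZMod M₁)) := by
    by_cases hS1 : ((S:ℤ) : ZMod M₁) = 0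
    · have hK1 : ((K:ℤ) : ZMod M₁) = 0 := by
        have := hKS1
        rw [hS1] at this
        rcases mul_eq_zero.mp this with h | h
        · exact absurd h hM₃1
        · exact h
      rw [hS1, hK1, MulChar.map_nonunit χ₁ not_isUnit_zero, map_zero, mul_zero]
    · have hK1 : ((K:ℤ) : ZMod M₁) ≠ 0 := by
        intro h
        rw [h, mul_zero] at hKS1
        exact hS1 hKS1.symm
      have hmul : χ₁ ((M₃:ℕ) : ZMod M₁) * χ₁ ((K:ℤ) : ZMod M₁) = χ₁ ((S:ℤ) : ZMod M₁) := by
        rw [← map_mul, hKS1]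
      have := congrArg (starRingEnd ℂ) hmul
      rw [map_mul] at this
      have h2 := mulChar_mul_conj χ₁ hM₃1
      calc (starRingEnd ℂ) (χ₁ ((K:ℤ) : ZMod M₁))
          = (χ₁ ((M₃:ℕ) : ZMod M₁) * (starRingEnd ℂ) (χ₁ ((M₃:ℕ) : ZMod M₁))) *
            (starRingEnd ℂ) (χ₁ ((K:ℤ) : ZMod M₁)) := by rw [h2, one_mul]
        _ = χ₁ ((M₃:ℕ) : ZMod M₁) * ((starRingEnd ℂ) (χ₁ ((M₃:ℕ) : ZMod M₁)) *
            (starRingEnd ℂ) (χ₁ ((K:ℤ) : ZMod M₁))) := by ring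
        _ = χ₁ ((M₃:ℕ) : ZMod M₁) * (starRingEnd ℂ) (χ₁ ((S:ℤ) : ZMod M₁)) := by rw [this]
  have hχ₁mul : χ₁ (((q*M₂ : ℕ):ℤ) : ZMod M₁) * χ₁ ((M₃:ℕ) : ZMod M₁)
      = χ₁ (((q * M₂ * M₃ : ℕ) : ℤ) : ZMod M₁) := by
    rw [← map_mul]
    congr 1
    push_cast
    ring
  constructor
  · intro hdvd
    rw [if_pos ((hdvd_iff).mpr hdvd)]
    rw [hconj1, hKn]
    rw [show ((S:ℤ) : ZMod M₁) = (((M₂ : ℤ) * m + (M₃ : ℤ) * n : ℤ) : ZMod M₁) from by rw [hS]]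
    rw [← hχ₁mul]
    ring
  · intro hndvd
    rw [if_neg (fun h => hndvd ((hdvd_iff).mp h))]
    ring
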